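/- Let q ∈ (0,1] and let n be a nonnegative integer. Then the triangular q-Bernstein polynomials of degree n form a partition of unity: Σ_{i+j+k=n} B^n_{ijk}(u,v) = 1 for all real u, v, where the sum is over all nonnegative integers i, j, k with i + j + k = n. -/
import Mathlib


open Finset

/-- The q-integer [r] = 1 + q + ... + q^(r-1). -/
noncomputable def qInt (q : ℝ) (r : ℕ) : ℝ := ∑ s ∈ Finset.range r, q ^ s

/-- The q-factorial [r]!. -/
noncomputable def qFact (q : ℝ) : ℕ → ℝ
  | 0 => 1
  | r + 1 => qInt q (r + 1) * qFact q r

/-- The q-binomial coefficient [i choose j]_q (zero unless i ≥ j ≥ 0). -/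
noncomputable def qBinom (q : ℝ) (i j : ℕ) : ℝ :=
  if j ≤ i then qFact q i / (qFact q j * qFact q (i - j)) else 0

/-- The q-binomial coefficient with integer indices, zero unless i ≥ j ≥ 0. -/
noncomputable def qBinomZ (q : ℝ) (i j : ℤ) : ℝ :=
  if 0 ≤ j ∧ j ≤ i then qFact q i.toNat / (qFact q j.toNat * qFact q (i - j).toNat) else 0

/-- The triangular q-Bernstein polynomial B^n_{ijk}(u,v)
    (meaningful for i + j + k = n). -/
noncomputable def triB (q : ℝ) (n i j k : ℕ) (u v : ℝ) : ℝ :=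
  qBinom q n k * (Nat.choose (i + j) i : ℝ) * u ^ i * v ^ j *
    ∏ s ∈ Finset.range k, (1 - q ^ s * u - q ^ s * v)

/-- The triangular q-Bernstein polynomial with integer indices; by convention it is
    zero whenever any of the indices is negative. -/
noncomputable def triBZ (q : ℝ) (n : ℕ) (i j k : ℤ) (u v : ℝ) : ℝ :=
  if 0 ≤ i ∧ 0 ≤ j ∧ 0 ≤ k then triB q n i.toNat j.toNat k.toNat u v else 0

/-- The classical triangular Bernstein polynomial b^n_{ijk}(u,v). -/
noncomputable def triBern (n i j k : ℕ) (u v : ℝ) : ℝ :=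
  (Nat.factorial n : ℝ) /
      ((Nat.factorial i : ℝ) * (Nat.factorial j : ℝ) * (Nat.factorial k : ℝ)) *
    u ^ i * v ^ j * (1 - u - v) ^ k

/-- The set of triples (i, j, k) of nonnegative integers with i + j + k = n. -/
def simplex (n : ℕ) : Finset (ℕ × ℕ × ℕ) :=
  (Finset.range (n + 1) ×ˢ Finset.range (n + 1) ×ˢ Finset.range (n + 1)).filter
    (fun p => p.1 + p.2.1 + p.2.2 = n)

lemma qInt_pos {q : ℝ} (hq : 0 < q) (r : ℕ) : 0 < qInt q (r + 1) := by
  apply Finset.sum_pos (fun s _ => pow_pos hq s) (by simp)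

lemma qFact_pos {q : ℝ} (hq : 0 < q) (r : ℕ) : 0 < qFact q r := by
  induction r with
  | zero => norm_num [qFact]
  | succ r ih => exact mul_pos (qInt_pos hq r) ih

lemma qInt_split (q : ℝ) {k n : ℕ} (h : k ≤ n) :
    qInt q n = qInt q k + q ^ k * qInt q (n - k) := by
  have : n = k + (n - k) := by omega
  rw [this, qInt, Finset.sum_range_add, qInt, qInt, Finset.mul_sum]
  simp [pow_add]

lemma qBinom_zero (q : ℝ) (hq : 0 < q) (n : ℕ) : qBinom q n 0 = 1 := by
  simp [qBinom, qFact, (qFact_pos hq n).ne']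

lemma qBinom_self (q : ℝ) (hq : 0 < q) (n : ℕ) : qBinom q n n = 1 := by
  simp [qBinom, qFact, (qFact_pos hq n).ne']

lemma qBinom_gt (q : ℝ) {n k : ℕ} (h : n < k) : qBinom q n k = 0 := by
  simp [qBinom, Nat.not_le.mpr h]

lemma pascal {q : ℝ} (hq : 0 < q) {k n : ℕ} (hk : k ≤ n) :
    qBinom q (n + 1) (k + 1) = q ^ (k + 1) * qBinom q n (k + 1) + qBinom q n k := by
  rcases eq_or_lt_of_le hk with rfl | hk'
  · rw [qBinom_self q hq, qBinom_self q hq, qBinom_gt q (Nat.lt_succ_self _)]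
    ring
  · have h1 : k + 1 ≤ n := hk'
    rw [qBinom, qBinom, qBinom, if_pos (by omega), if_pos h1, if_pos hk]
    have e1 : n + 1 - (k + 1) = n - k := by omega
    have e2 : n - k = (n - (k + 1)) + 1 := by omega
    rw [e1, e2, show qFact q (n+1) = qInt q (n+1) * qFact q n from rfl,
      show qFact q (k+1) = qInt q (k+1) * qFact q k from rfl,
      show qFact q ((n - (k+1)) + 1) = qInt q ((n - (k+1)) + 1) * qFact q (n - (k+1)) from rfl]
    have hs : qInt q (n + 1) = qInt q (k + 1) + q ^ (k + 1) * qInt q (n + 1 - (k + 1)) :=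
      qInt_split q (by omega)
    rw [e1] at hs
    have p1 := (qInt_pos hq k).ne'
    have p2 := (qInt_pos hq (n - (k+1))).ne'
    have p3 := (qFact_pos hq k).ne'
    have p4 := (qFact_pos hq (n - (k+1))).ne'
    rw [e2] at hs
    field_simp
    rw [hs]; ring

lemma qbt {q : ℝ} (hq : 0 < q) (n : ℕ) (w : ℝ) :
    ∑ k ∈ range (n + 1), qBinom q n k * w ^ (n - k) * ∏ s ∈ range k, (1 - q ^ s * w) = 1 := by
  induction n with
  | zero => simp [qBinom_zero q hq]
  | succ n ih =>
    rw [Finset.sum_range_succ']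
    have key : ∀ k ∈ range (n + 1),
        qBinom q (n+1) (k+1) * w ^ (n + 1 - (k+1)) * ∏ s ∈ range (k+1), (1 - q ^ s * w)
        = (q ^ (k+1) * qBinom q n (k+1) * w ^ (n + 1 - (k+1)) * ∏ s ∈ range (k+1), (1 - q ^ s * w))
          + (qBinom q n k * w ^ (n - k) * ∏ s ∈ range k, (1 - q ^ s * w))
          - (q ^ k * qBinom q n k * w ^ (n + 1 - k) * ∏ s ∈ range k, (1 - q ^ s * w)) := by
      intro k hk
      rw [mem_range] at hk
      rw [pascal hq (by omega), Finset.prod_range_succ]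
      have e1 : n + 1 - (k + 1) = n - k := by omega
      have e2 : n + 1 - k = (n - k) + 1 := by omega
      rw [e1, e2, pow_succ]
      ring
    rw [Finset.sum_congr rfl key]
    rw [Finset.sum_sub_distrib, Finset.sum_add_distrib, ih]
    set g : ℕ → ℝ := fun k => q ^ k * qBinom q n k * w ^ (n + 1 - k) * ∏ s ∈ range k, (1 - q ^ s * w) with hg
    have h2 : ∑ k ∈ range (n + 2), g k = ∑ k ∈ range (n + 1), g k := by
      rw [Finset.sum_range_succ, hg]
      simp [qBinom_gt q (Nat.lt_succ_self n)]
    have shift : (∑ k ∈ range (n + 1), g (k + 1)) = (∑ k ∈ range (n + 1), g k) - g 0 := by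
      rw [eq_sub_iff_add_eq]
      exact (Finset.sum_range_succ' g (n + 1)).symm.trans h2
    have e3 : ∀ k, g (k + 1)
        = q ^ (k+1) * qBinom q n (k+1) * w ^ (n + 1 - (k+1)) * ∏ s ∈ range (k+1), (1 - q ^ s * w) := fun k => rfl
    rw [← Finset.sum_congr rfl (fun k _ => e3 k), shift, hg]
    simp only [prod_range_zero, pow_zero, Nat.sub_zero, one_mul, mul_one,
      qBinom_zero q hq]
    ring

/-- the triangular q-Bernstein polynomials form a partition of unity. -/
theorem stmt4 (q : ℝ) (hq0 : 0 < q) (hq1 : q ≤ 1) (n : ℕ) (u v : ℝ) :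
    ∑ p ∈ simplex n, triB q n p.1 p.2.1 p.2.2 u v = 1 := by
  have step1 : ∑ p ∈ simplex n, triB q n p.1 p.2.1 p.2.2 u v
      = ∑ x ∈ (range (n+1)).sigma (fun k => range (n+1-k)),
          triB q n x.2 (n - x.1 - x.2) x.1 u v := by
    apply Finset.sum_nbij' (fun p => ⟨p.2.2, p.1⟩) (fun x => (x.2, n - x.1 - x.2, x.1))
    · intro a ha
      simp only [simplex, Finset.mem_filter, Finset.mem_product, Finset.mem_range] at ha
      simp only [Finset.mem_sigma, Finset.mem_range]
      omega
    · intro a ha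
      simp only [Finset.mem_sigma, Finset.mem_range] at ha
      simp only [simplex, Finset.mem_filter, Finset.mem_product, Finset.mem_range]
      omega
    · rintro ⟨i, j, k⟩ ha
      simp [simplex, Finset.mem_product] at ha
      dsimp only
      simp only [Prod.mk.injEq]
      refine ⟨trivial, by omega, trivial⟩
    · intro a _; rfl
    · rintro ⟨i, j, k⟩ ha
      simp [simplex, Finset.mem_product] at ha
      have : j = n - k - i := by omega
      rw [this]
  rw [step1, Finset.sum_sigma]
  have inner : ∀ k ∈ range (n + 1),
      ∑ i ∈ range (n + 1 - k), triB q n i (n - k - i) k u v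
        = qBinom q n k * (u + v) ^ (n - k) * ∏ s ∈ range k, (1 - q ^ s * (u + v)) := by
    intro k hk
    rw [mem_range] at hk
    have e : n + 1 - k = (n - k) + 1 := by omega
    rw [e, add_pow, Finset.mul_sum, Finset.sum_mul]
    apply Finset.sum_congr rfl
    intro i hi
    rw [mem_range] at hi
    have e2 : i + (n - k - i) = n - k := by omega
    rw [triB, e2]
    rw [show ∏ s ∈ range k, (1 - q ^ s * u - q ^ s * v)
        = ∏ s ∈ range k, (1 - q ^ s * (u + v)) from Finset.prod_congr rfl (fun s _ => by ring)]
    ring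
  rw [Finset.sum_congr rfl inner]
  exact qbt hq0 n (u + v)
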